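/- For the 8-dimensional Lie algebra L_{8,17}^{-1} with nonzero brackets [X_1,X_2]=2X_2, [X_1,X_3]=-2X_3, [X_2,X_3]=X_1, [X_1,X_4]=X_4, [X_1,X_5]=-X_5, [X_2,X_5]=X_4, [X_3,X_4]=X_5, [X_1,X_6]=X_6, [X_1,X_7]=-X_7, [X_2,X_7]=X_6, [X_3,X_6]=X_7, [X_4,X_8]=X_4, [X_5,X_8]=X_5, [X_6,X_8]=-X_6, [X_7,X_8]=-X_7, the polynomials I_1 = x_4x_7 - x_5x_6 and I_2 = x_1(x_4x_7+x_5x_6) + 2x_2x_5x_7 - 2x_3x_4x_6 + x_8(x_4x_7 - x_5x_6) are annihilated by all coadjoint vector fields X̂_i = C_{ij}^k x_k ∂/∂x_j, i = 1,…,8. -/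

import Mathlib

open scoped BigOperators

noncomputable def Xhat {n : ℕ} (C : Fin n → Fin n → Fin n → ℝ)
    (F : (Fin n → ℝ) → ℝ) (i : Fin n) (x : Fin n → ℝ) : ℝ :=
  ∑ j, ∑ k, C i j k * x k * fderiv ℝ F x (Pi.single j 1)

def C817 : Fin 8 → Fin 8 → Fin 8 → ℝ := fun i j k =>
  match i.1, j.1, k.1 with
  | 0, 1, 1 => 2
  | 1, 0, 1 => -2
  | 0, 2, 2 => -2
  | 2, 0, 2 => 2
  | 1, 2, 0 => 1
  | 2, 1, 0 => -1
  | 0, 3, 3 => 1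
  | 3, 0, 3 => -1
  | 0, 4, 4 => -1
  | 4, 0, 4 => 1
  | 1, 4, 3 => 1
  | 4, 1, 3 => -1
  | 2, 3, 4 => 1
  | 3, 2, 4 => -1
  | 0, 5, 5 => 1
  | 5, 0, 5 => -1
  | 0, 6, 6 => -1
  | 6, 0, 6 => 1
  | 1, 6, 5 => 1
  | 6, 1, 5 => -1
  | 2, 5, 6 => 1
  | 5, 2, 6 => -1
  | 3, 7, 3 => 1
  | 7, 3, 3 => -1
  | 4, 7, 4 => 1
  | 7, 4, 4 => -1
  | 5, 7, 5 => -1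
  | 7, 5, 5 => 1
  | 6, 7, 6 => -1
  | 7, 6, 6 => 1
  | _, _, _ => 0

section
variable (x v : Fin 8 → ℝ)

private lemma hproj (i : Fin 8) : HasFDerivAt (fun y : Fin 8 → ℝ => y i)
    (ContinuousLinearMap.proj i : (Fin 8 → ℝ) →L[ℝ] ℝ) x :=
  (ContinuousLinearMap.proj i : (Fin 8 → ℝ) →L[ℝ] ℝ).hasFDerivAt

private lemma dF1 :
    fderiv ℝ (fun y : Fin 8 → ℝ => y 3 * y 6 - y 4 * y 5) x v
      = x 3 * v 6 + x 6 * v 3 - (x 4 * v 5 + x 5 * v 4) := by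
  erw [(((hproj x 3).mul (hproj x 6)).sub ((hproj x 4).mul (hproj x 5))).fderiv]
  simp [smul_eq_mul]

private lemma dF2 :
    fderiv ℝ (fun y : Fin 8 → ℝ =>
      y 0 * (y 3 * y 6 + y 4 * y 5) + 2 * y 1 * y 4 * y 6
        - 2 * y 2 * y 3 * y 5 + y 7 * (y 3 * y 6 - y 4 * y 5)) x v
      = x 0 * (x 3 * v 6 + x 6 * v 3 + (x 4 * v 5 + x 5 * v 4))
        + (x 3 * x 6 + x 4 * x 5) * v 0
        + (2 * x 1 * x 4 * v 6 + x 6 * (2 * x 1 * v 4 + x 4 * (2 * v 1)))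
        - (2 * x 2 * x 3 * v 5 + x 5 * (2 * x 2 * v 3 + x 3 * (2 * v 2)))
        + (x 7 * (x 3 * v 6 + x 6 * v 3 - (x 4 * v 5 + x 5 * v 4))
            + (x 3 * x 6 - x 4 * x 5) * v 7) := by
  erw [(((((hproj x 0).mul (((hproj x 3).mul (hproj x 6)).add
      ((hproj x 4).mul (hproj x 5)))).add
      ((((hproj x 1).const_mul 2).mul (hproj x 4)).mul (hproj x 6))).sub
      ((((hproj x 2).const_mul 2).mul (hproj x 3)).mul (hproj x 5))).add
      ((hproj x 7).mul (((hproj x 3).mul (hproj x 6)).sub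
        ((hproj x 4).mul (hproj x 5))))).fderiv]
  simp [smul_eq_mul]; ring

end

set_option maxHeartbeats 10000000 in
theorem L817_invariants :
    ∀ (i : Fin 8) (x : Fin 8 → ℝ),
      Xhat C817 (fun y => y 3 * y 6 - y 4 * y 5) i x = 0 ∧
      Xhat C817 (fun y => y 0 * (y 3 * y 6 + y 4 * y 5) + 2 * y 1 * y 4 * y 6
        - 2 * y 2 * y 3 * y 5 + y 7 * (y 3 * y 6 - y 4 * y 5)) i x = 0 := by
  intro i x
  constructor
  · unfold Xhat
    simp only [dF1, Fin.sum_univ_eight]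
    fin_cases i <;>
      · simp (config := { decide := true }) [C817, Pi.single_apply]
        try ring_nf
  · unfold Xhat
    simp only [dF2, Fin.sum_univ_eight]
    fin_cases i <;>
      · simp (config := { decide := true }) [C817, Pi.single_apply]
        try ring_nf
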